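/- Adjacent-pair case of the proof of Theorem 2: let m ≥ 5 and r ∈ ZMod m. For every fault pattern F with w(F) ≤ 2 whose observed syndrome has supp s(F) = {r−1, r}, flipping data bit 2r+1 leaves a residual error of weight at most w(F); that is, wt(e(F) + 1_{2r+1}) ≤ w(F), where 1_{2r+1} is the indicator vector of the single data position 2r+1. -/
import Mathlib


open scoped Classical

namespace CutCat

/-- A fault in the cut-cat single-round fault model, located at cat qubit `r`. -/
inductive Fault (m : ℕ) where
  | pre  (r : ZMod m)
  | mid  (r : ZMod m)
  | post (r : ZMod m)
  | meas (r : ZMod m)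

variable {m : ℕ}

/-- The index (in `ZMod (2*m)`) of the data qubit `2r` coupled to cat qubit `r`. -/
def d0 (r : ZMod m) : ZMod (2 * m) := 2 * (r.val : ZMod (2 * m))

/-- The data-qubit error contributed by a single fault. -/
def Fault.dataErr : Fault m → ZMod (2 * m) → ZMod 2
  | .pre r  => fun q => (if q = d0 r then 1 else 0) + (if q = d0 r + 1 then 1 else 0)
  | .mid r  => fun q => if q = d0 r + 1 then 1 else 0
  | .post _ => 0
  | .meas _ => 0

/-- The cat-stabilizer syndrome contribution of a single fault
    (syndrome bit `j` checks cat qubits `j` and `j+1`). -/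
def Fault.syn : Fault m → ZMod m → ZMod 2
  | .pre r  => fun j => (if j = r - 1 then 1 else 0) + (if j = r then 1 else 0)
  | .mid r  => fun j => (if j = r - 1 then 1 else 0) + (if j = r then 1 else 0)
  | .post r => fun j => (if j = r - 1 then 1 else 0) + (if j = r then 1 else 0)
  | .meas r => fun j => if j = r then 1 else 0

/-- The data error `e(F)` of a fault pattern `F` (coordinatewise mod-2 sum). -/
def dataErr (F : Multiset (Fault m)) : ZMod (2 * m) → ZMod 2 :=
  (F.map Fault.dataErr).sum

/-- The observed syndrome `s(F)` of a fault pattern `F` (coordinatewise mod-2 sum). -/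
def synd (F : Multiset (Fault m)) : ZMod m → ZMod 2 :=
  (F.map Fault.syn).sum

/-- Hamming weight of a binary vector. -/
noncomputable def wt {n : ℕ} (f : ZMod n → ZMod 2) : ℕ := {i | f i ≠ 0}.ncard

/-- The set of triggered syndrome bits, `supp s(F)`. -/
def suppSyn (F : Multiset (Fault m)) : Set (ZMod m) := {j | synd F j = 1}

/-- Boundary of a set of cat qubits: checks `j` with exactly one of `j`, `j+1` in `E`. -/
def boundary (E : Set (ZMod m)) : Set (ZMod m) := {j | Xor' (j ∈ E) (j + 1 ∈ E)}

/-- Indicator (as a binary data vector) of the set `{2r+1 : r ∈ E}`. -/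
noncomputable def indicOdd (E : Set (ZMod m)) : ZMod (2 * m) → ZMod 2 :=
  fun q => if ∃ r ∈ E, q = d0 r + 1 then 1 else 0

/-- Indicator of a single data position `j`. -/
def indic {n : ℕ} (j : ZMod n) : ZMod n → ZMod 2 := fun q => if q = j then 1 else 0

/-- `c` is the correction output by the minimum-weight decoder with parameter `t`
    on syndrome `s(F)`: if there is a set `E` of at most `t` cat qubits whose
    boundary equals `supp s(F)`, then `c` is the indicator of `{2r+1 : r ∈ E}`;
    otherwise `c = 0`. -/
def IsDecoderCorrection (t : ℕ) (F : Multiset (Fault m)) (c : ZMod (2 * m) → ZMod 2) : Prop :=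
  (∃ E : Set (ZMod m), E.ncard ≤ t ∧ boundary E = suppSyn F ∧ c = indicOdd E) ∨
  ((¬ ∃ E : Set (ZMod m), E.ncard ≤ t ∧ boundary E = suppSyn F) ∧ c = 0)

/-- `true` iff the fault is a measurement fault. -/
def Fault.isMeas : Fault m → Bool
  | .meas _ => true
  | _ => false

end CutCat

section AuxLemmas

lemma CutCat.natCast_ne_zero_of_lt {m k : ℕ} (hm : 2 ≤ m) (hk0 : k ≠ 0) (hk : k < m) :
    (k : ZMod m) ≠ 0 := by
  haveI : NeZero m := ⟨by omega⟩
  intro hh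
  have hd : m ∣ k := (ZMod.natCast_eq_zero_iff k m).mp hh
  have := Nat.le_of_dvd (by omega) hd
  omega

lemma CutCat.pin {m : ℕ} (h1 : (1 : ZMod m) ≠ 0) (h2 : (2 : ZMod m) ≠ 0)
    {r x : ZMod m} (hb : x = r - 1 ∨ x = r) (hb1 : x - 1 = r - 1 ∨ x - 1 = r) : x = r := by
  rcases hb with h | h
  · rcases hb1 with h' | h'
    · exact absurd (by linear_combination h - h') h1
    · exact absurd (by linear_combination h - h') h2
  · exact h

lemma CutCat.wt_indic {n : ℕ} (j : ZMod n) : CutCat.wt (CutCat.indic j) = 1 := by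
  have h : {i : ZMod n | CutCat.indic j i ≠ 0} = {j} := by
    ext i; by_cases h : i = j <;> simp [CutCat.indic, h]
  rw [CutCat.wt, h, Set.ncard_singleton]

lemma CutCat.one_mem {m : ℕ} {j a : ZMod m}
    (h : (if j = a then (1 : ZMod 2) else 0) = 1) : j = a := by
  by_cases c : j = a
  · exact c
  · rw [if_neg c] at h; exact absurd h (by decide)

lemma CutCat.two_mem {m : ℕ} {j a : ZMod m}
    (h : ((if j = a - 1 then (1 : ZMod 2) else 0) + (if j = a then 1 else 0)) = 1) :
    j = a - 1 ∨ j = a := by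
  by_cases c1 : j = a - 1
  · exact Or.inl c1
  · by_cases c2 : j = a
    · exact Or.inr c2
    · rw [if_neg c1, if_neg c2] at h; exact absurd h (by decide)

/-- Contradiction: one measurement fault (at `a`) plus one non-measurement fault (at `b`)
cannot have syndrome support `{r-1, r}`. -/
lemma CutCat.measB {m : ℕ} (h1 : (1 : ZMod m) ≠ 0) (h2 : (2 : ZMod m) ≠ 0)
    {r a b : ZMod m}
    (H : ∀ j : ZMod m, ((if j = a then (1 : ZMod 2) else 0) +
      ((if j = b - 1 then (1 : ZMod 2) else 0) + (if j = b then 1 else 0)) = 1)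
      ↔ (j = r - 1 ∨ j = r)) : False := by
  by_cases hab1 : a = b - 1
  · have key : ∀ j : ZMod m, (j = r - 1 ∨ j = r) → j = b := by
      intro j hj
      have h := (H j).mpr hj
      rw [hab1] at h
      by_cases c1 : j = b - 1 <;> by_cases c2 : j = b
      · exact c2
      · rw [if_pos c1, if_neg c2] at h; exact absurd h (by decide)
      · exact c2
      · rw [if_neg c1, if_neg c2] at h; exact absurd h (by decide)
    have e1 := key (r - 1) (Or.inl rfl)
    have e2 := key r (Or.inr rfl)
    exact h1 (by linear_combination e2 - e1)
  · by_cases hab : a = b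
    · have key : ∀ j : ZMod m, (j = r - 1 ∨ j = r) → j = b - 1 := by
        intro j hj
        have h := (H j).mpr hj
        rw [hab] at h
        by_cases c1 : j = b <;> by_cases c2 : j = b - 1
        · exact c2
        · rw [if_pos c1, if_neg c2] at h; exact absurd h (by decide)
        · exact c2
        · rw [if_neg c1, if_neg c2] at h; exact absurd h (by decide)
      have e1 := key (r - 1) (Or.inl rfl)
      have e2 := key r (Or.inr rfl)
      exact h1 (by linear_combination e2 - e1)
    · have hbb : b ≠ b - 1 := fun h => h1 (by linear_combination h)
      have ha : a = r - 1 ∨ a = r := (H a).mp (by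
        rw [if_pos rfl, if_neg hab1, if_neg hab]; decide)
      have hb1m : b - 1 = r - 1 ∨ b - 1 = r := (H (b - 1)).mp (by
        rw [if_neg (fun h => hab1 h.symm), if_pos rfl, if_neg (fun h => hbb h.symm)]; decide)
      have hbm : b = r - 1 ∨ b = r := (H b).mp (by
        rw [if_neg (fun h => hab h.symm), if_neg hbb, if_pos rfl]; decide)
      have hbr : b = r := CutCat.pin h1 h2 hbm hb1m
      rcases ha with h | h
      · exact hab1 (by rw [h, hbr])
      · exact hab (h.trans hbr.symm)

/-- Same with the summands in the other order. -/
lemma CutCat.measB' {m : ℕ} (h1 : (1 : ZMod m) ≠ 0) (h2 : (2 : ZMod m) ≠ 0)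
    {r a b : ZMod m}
    (H : ∀ j : ZMod m, ((((if j = b - 1 then (1 : ZMod 2) else 0) + (if j = b then 1 else 0)) +
      (if j = a then (1 : ZMod 2) else 0)) = 1)
      ↔ (j = r - 1 ∨ j = r)) : False := by
  apply CutCat.measB h1 h2 (r := r) (a := a) (b := b)
  intro j
  have e : (if j = a then (1 : ZMod 2) else 0) +
      ((if j = b - 1 then (1 : ZMod 2) else 0) + (if j = b then 1 else 0)) =
      (((if j = b - 1 then (1 : ZMod 2) else 0) + (if j = b then 1 else 0)) +
      (if j = a then (1 : ZMod 2) else 0)) := by ring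
  rw [e]
  exact H j

/-- Contradiction: two non-measurement faults (at `a` and `b`) cannot have
syndrome support `{r-1, r}` when `m ≥ 5`. -/
lemma CutCat.nmnm {m : ℕ} (h1 : (1 : ZMod m) ≠ 0) (h2 : (2 : ZMod m) ≠ 0)
    (h3 : (3 : ZMod m) ≠ 0) {r a b : ZMod m}
    (H : ∀ j : ZMod m, ((((if j = a - 1 then (1 : ZMod 2) else 0) + (if j = a then 1 else 0)) +
      ((if j = b - 1 then (1 : ZMod 2) else 0) + (if j = b then 1 else 0))) = 1)
      ↔ (j = r - 1 ∨ j = r)) : False := by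
  by_cases hab : a = b
  · have h := (H r).mpr (Or.inr rfl)
    rw [hab] at h
    split_ifs at h <;> exact absurd h (by decide)
  · by_cases hab1 : a = b - 1
    · -- b = a + 1
      have d21 : b - 1 - 1 ≠ b - 1 := fun h => h1 (by linear_combination -h)
      have d2b : b - 1 - 1 ≠ b := fun h => h2 (by linear_combination -h)
      have d1b : b - 1 ≠ b := fun h => h1 (by linear_combination -h)
      have d2b' : ¬ (b = b - 1 - 1) := fun h => d2b h.symm
      have d1b' : ¬ (b = b - 1) := fun h => d1b h.symm
      have hA : b - 1 - 1 = r - 1 ∨ b - 1 - 1 = r := (H (b - 1 - 1)).mp (by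
        rw [hab1, if_neg d21, if_neg d2b]; simp)
      have hB : b = r - 1 ∨ b = r := (H b).mp (by
        rw [hab1, if_neg d2b', if_neg d1b']; simp)
      rcases hB with h | h <;> rcases hA with h' | h'
      · exact h2 (by linear_combination h - h')
      · exact h3 (by linear_combination h - h')
      · exact h1 (by linear_combination h - h')
      · exact h2 (by linear_combination h - h')
    · by_cases hba1 : b = a - 1
      · -- a = b + 1
        have d21 : a - 1 - 1 ≠ a - 1 := fun h => h1 (by linear_combination -h)
        have d2b : a - 1 - 1 ≠ a := fun h => h2 (by linear_combination -h)
        have d1b : a - 1 ≠ a := fun h => h1 (by linear_combination -h)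
        have d2b' : ¬ (a = a - 1 - 1) := fun h => d2b h.symm
        have d1b' : ¬ (a = a - 1) := fun h => d1b h.symm
        have hA : a - 1 - 1 = r - 1 ∨ a - 1 - 1 = r := (H (a - 1 - 1)).mp (by
          rw [hba1, if_neg d21, if_neg d2b]; simp)
        have hB : a = r - 1 ∨ a = r := (H a).mp (by
          rw [hba1, if_neg d1b', if_neg d2b']; simp)
        rcases hB with h | h <;> rcases hA with h' | h'
        · exact h2 (by linear_combination h - h')
        · exact h3 (by linear_combination h - h')
        · exact h1 (by linear_combination h - h')
        · exact h2 (by linear_combination h - h')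
      · -- generic position
        have daa : a ≠ a - 1 := fun h => h1 (by linear_combination h)
        have dbb : b ≠ b - 1 := fun h => h1 (by linear_combination h)
        have dab1 : a - 1 ≠ b - 1 := fun h => hab (by linear_combination h)
        have ha : a = r - 1 ∨ a = r := (H a).mp (by
          rw [if_neg daa, if_pos rfl, if_neg hab1, if_neg hab]; decide)
        have ha1 : a - 1 = r - 1 ∨ a - 1 = r := (H (a - 1)).mp (by
          rw [if_pos rfl, if_neg (fun h => daa h.symm), if_neg dab1,
            if_neg (fun h => hba1 h.symm)]; decide)
        have hb : b = r - 1 ∨ b = r := (H b).mp (by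
          rw [if_neg hba1, if_neg (fun h => hab h.symm), if_neg dbb, if_pos rfl]; decide)
        have hb1 : b - 1 = r - 1 ∨ b - 1 = r := (H (b - 1)).mp (by
          rw [if_neg (fun h => dab1 h.symm), if_neg (fun h => hab1 h.symm),
            if_pos rfl, if_neg (fun h => dbb h.symm)]; decide)
        have har : a = r := CutCat.pin h1 h2 ha ha1
        have hbr : b = r := CutCat.pin h1 h2 hb hb1
        exact hab (har.trans hbr.symm)

end AuxLemmas

/-- Adjacent-pair case of the proof of Theorem 2: if `w(F) ≤ 2` and the
triggered stabilizers are exactly `{r-1, r}`, then flipping data bit `2r+1`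
leaves a residual error of weight at most `w(F)`. -/
theorem cutcat_d5_adjacent_pair (m : ℕ) (hm : 5 ≤ m) (r : ZMod m)
    (F : Multiset (CutCat.Fault m)) (hF : Multiset.card F ≤ 2)
    (hs : CutCat.suppSyn F = {r - 1, r}) :
    CutCat.wt (CutCat.dataErr F + CutCat.indic (CutCat.d0 r + 1)) ≤ Multiset.card F := by
  haveI : NeZero m := ⟨by omega⟩
  have h1 : (1 : ZMod m) ≠ 0 := by
    simpa using CutCat.natCast_ne_zero_of_lt (m := m) (k := 1) (by omega) (by norm_num) (by omega)
  have h2 : (2 : ZMod m) ≠ 0 := by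
    simpa using CutCat.natCast_ne_zero_of_lt (m := m) (k := 2) (by omega) (by norm_num) (by omega)
  have h3 : (3 : ZMod m) ≠ 0 := by
    simpa using CutCat.natCast_ne_zero_of_lt (m := m) (k := 3) (by omega) (by norm_num) (by omega)
  have h1' : (1 : ZMod (2 * m)) ≠ 0 := by
    simpa using CutCat.natCast_ne_zero_of_lt (m := 2 * m) (k := 1) (by omega) (by norm_num) (by omega)
  have hmem : ∀ j : ZMod m, CutCat.synd F j = 1 ↔ (j = r - 1 ∨ j = r) := by
    intro j
    have := Set.ext_iff.mp hs j
    simpa [CutCat.suppSyn] using this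
  obtain h0 | hc1 | hc2 : Multiset.card F = 0 ∨ Multiset.card F = 1 ∨ Multiset.card F = 2 := by
    omega
  · rw [Multiset.card_eq_zero] at h0
    subst h0
    have h := (hmem r).mpr (Or.inr rfl)
    simp [CutCat.synd] at h
  · obtain ⟨f, hf⟩ := Multiset.card_eq_one.mp hc1
    subst hf
    simp only [CutCat.synd, Multiset.map_singleton, Multiset.sum_singleton] at hmem
    cases f with
    | meas a =>
        exfalso
        have e1 : r - 1 = a := CutCat.one_mem ((hmem (r - 1)).mpr (Or.inl rfl))
        have e2 : r = a := CutCat.one_mem ((hmem r).mpr (Or.inr rfl))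
        exact h1 (by linear_combination e2 - e1)
    | pre a =>
        have har : r = a := CutCat.pin h1 h2
          (CutCat.two_mem ((hmem r).mpr (Or.inr rfl)))
          (CutCat.two_mem ((hmem (r - 1)).mpr (Or.inl rfl)))
        subst har
        have hres : CutCat.dataErr {CutCat.Fault.pre r} + CutCat.indic (CutCat.d0 r + 1)
            = CutCat.indic (CutCat.d0 r) := by
          funext q
          simp only [CutCat.dataErr, Multiset.map_singleton, Multiset.sum_singleton,
            CutCat.Fault.dataErr, Pi.add_apply, CutCat.indic]
          by_cases c1 : q = CutCat.d0 r <;> by_cases c2 : q = CutCat.d0 r + 1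
          · exact absurd (show (1 : ZMod (2 * m)) = 0 by linear_combination c1 - c2) h1'
          · rw [if_pos c1, if_neg c2]; decide
          · rw [if_neg c1, if_pos c2]; decide
          · rw [if_neg c1, if_neg c2]; decide
        rw [hres, CutCat.wt_indic]
        simp
    | mid a =>
        have har : r = a := CutCat.pin h1 h2
          (CutCat.two_mem ((hmem r).mpr (Or.inr rfl)))
          (CutCat.two_mem ((hmem (r - 1)).mpr (Or.inl rfl)))
        subst har
        have hres2 : CutCat.dataErr {CutCat.Fault.mid r} + CutCat.indic (CutCat.d0 r + 1)
            = (0 : ZMod (2 * m) → ZMod 2) := by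
          funext q
          simp only [CutCat.dataErr, Multiset.map_singleton, Multiset.sum_singleton,
            CutCat.Fault.dataErr, Pi.add_apply, CutCat.indic, Pi.zero_apply]
          by_cases c : q = CutCat.d0 r + 1
          · rw [if_pos c]; decide
          · rw [if_neg c]; decide
        rw [hres2]
        have : CutCat.wt (0 : ZMod (2 * m) → ZMod 2) = 0 := by
          simp [CutCat.wt]
        rw [this]
        omega
    | post a =>
        have hres : CutCat.dataErr {CutCat.Fault.post a} + CutCat.indic (CutCat.d0 r + 1)
            = CutCat.indic (CutCat.d0 r + 1) := by
          funext q
          simp [CutCat.dataErr, CutCat.Fault.dataErr, CutCat.indic]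
        rw [hres, CutCat.wt_indic]
        simp
  · obtain ⟨f, g, hf⟩ := Multiset.card_eq_two.mp hc2
    subst hf
    simp only [CutCat.synd, Multiset.insert_eq_cons, Multiset.map_cons, Multiset.map_singleton,
      Multiset.sum_cons, Multiset.sum_singleton, Pi.add_apply] at hmem
    cases f with
    | meas a =>
        cases g with
        | meas b =>
            have hres : CutCat.dataErr {CutCat.Fault.meas a, CutCat.Fault.meas b}
                + CutCat.indic (CutCat.d0 r + 1) = CutCat.indic (CutCat.d0 r + 1) := by
              funext q
              simp [CutCat.dataErr, CutCat.Fault.dataErr, CutCat.indic]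
            rw [hres, CutCat.wt_indic]
            simp
        | pre b => exact absurd (fun j => hmem j) (fun H => CutCat.measB h1 h2 H)
        | mid b => exact absurd (fun j => hmem j) (fun H => CutCat.measB h1 h2 H)
        | post b => exact absurd (fun j => hmem j) (fun H => CutCat.measB h1 h2 H)
    | pre a =>
        cases g with
        | meas b => exact absurd (fun j => hmem j) (fun H => CutCat.measB' h1 h2 H)
        | pre b => exact absurd (fun j => hmem j) (fun H => CutCat.nmnm h1 h2 h3 H)
        | mid b => exact absurd (fun j => hmem j) (fun H => CutCat.nmnm h1 h2 h3 H)
        | post b => exact absurd (fun j => hmem j) (fun H => CutCat.nmnm h1 h2 h3 H)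
    | mid a =>
        cases g with
        | meas b => exact absurd (fun j => hmem j) (fun H => CutCat.measB' h1 h2 H)
        | pre b => exact absurd (fun j => hmem j) (fun H => CutCat.nmnm h1 h2 h3 H)
        | mid b => exact absurd (fun j => hmem j) (fun H => CutCat.nmnm h1 h2 h3 H)
        | post b => exact absurd (fun j => hmem j) (fun H => CutCat.nmnm h1 h2 h3 H)
    | post a =>
        cases g with
        | meas b => exact absurd (fun j => hmem j) (fun H => CutCat.measB' h1 h2 H)
        | pre b => exact absurd (fun j => hmem j) (fun H => CutCat.nmnm h1 h2 h3 H)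
        | mid b => exact absurd (fun j => hmem j) (fun H => CutCat.nmnm h1 h2 h3 H)
        | post b => exact absurd (fun j => hmem j) (fun H => CutCat.nmnm h1 h2 h3 H)
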